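/- Lemma 1 (feedback system identity): Suppose random variables x_0, x_1,...,x_n, e_1,...,e_n satisfy: (i) for each i, x_i is a deterministic function of (x_0, e^{i-1}); (ii) for each i, the Markov chain x_0 − (e^{i-1}, x^i) − e_i holds, i.e., I(x_0; e_i | e^{i-1}, x^i) = 0. Then I(x_0; e^n) = I(x^n → e^n) = Σ_{i=1}^n I(x^i; e_i | e^{i-1}). -/

import Mathlib

open scoped BigOperators

/-- Distribution of a finite-valued random variable `X` under pmf `p`. -/
noncomputable def rvDist {Ω A : Type*} [Fintype Ω] [Fintype A] [DecidableEq A]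
    (p : Ω → ℝ) (X : Ω → A) (a : A) : ℝ := ∑ ω, if X ω = a then p ω else 0

/-- Shannon entropy `H(X)`. -/
noncomputable def ent {Ω A : Type*} [Fintype Ω] [Fintype A] [DecidableEq A]
    (p : Ω → ℝ) (X : Ω → A) : ℝ := ∑ a, Real.negMulLog (rvDist p X a)

/-- Conditional entropy `H(X | Y) = H(X,Y) - H(Y)`. -/
noncomputable def condEnt {Ω A B : Type*} [Fintype Ω] [Fintype A] [DecidableEq A]
    [Fintype B] [DecidableEq B] (p : Ω → ℝ) (X : Ω → A) (Y : Ω → B) : ℝ :=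
  ent p (fun ω => (X ω, Y ω)) - ent p Y

/-- Mutual information `I(X;Y) = H(X)+H(Y)-H(X,Y)`. -/
noncomputable def MI {Ω A B : Type*} [Fintype Ω] [Fintype A] [DecidableEq A]
    [Fintype B] [DecidableEq B] (p : Ω → ℝ) (X : Ω → A) (Y : Ω → B) : ℝ :=
  ent p X + ent p Y - ent p (fun ω => (X ω, Y ω))

/-- Conditional mutual information `I(X;Y|Z) = H(X|Z)+H(Y|Z)-H(X,Y|Z)`. -/
noncomputable def CMI {Ω A B C : Type*} [Fintype Ω] [Fintype A] [DecidableEq A]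
    [Fintype B] [DecidableEq B] [Fintype C] [DecidableEq C]
    (p : Ω → ℝ) (X : Ω → A) (Y : Ω → B) (Z : Ω → C) : ℝ :=
  condEnt p X Z + condEnt p Y Z - condEnt p (fun ω => (X ω, Y ω)) Z

/-- The prefix `x^i = (x_1, …, x_i)` of a random sequence, as a random variable. -/
def pre {Ω A : Type*} {n : ℕ} (x : Fin n → Ω → A) (i : ℕ) (h : i ≤ n) :
    Ω → (Fin i → A) := fun ω j => x (Fin.castLE h j) ω

/-- Directed information `I(x^n → y^n) = ∑_{i=1}^n I(x^i; y_i | y^{i-1})`. -/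
noncomputable def DI {Ω A B : Type*} [Fintype Ω] [Fintype A] [DecidableEq A]
    [Fintype B] [DecidableEq B] {n : ℕ}
    (p : Ω → ℝ) (x : Fin n → Ω → A) (y : Fin n → Ω → B) : ℝ :=
  ∑ i : Fin n, CMI p (pre x (i.1+1) i.isLt) (y i) (pre y i.1 i.isLt.le)

section Aux

variable {Ω A B C D M : Type*} [Fintype Ω] [Fintype A] [DecidableEq A]
  [Fintype B] [DecidableEq B] [Fintype C] [DecidableEq C]
  [Fintype D] [DecidableEq D] [Fintype M] [DecidableEq M] {p : Ω → ℝ}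

lemma rvDist_nonneg (hp : ∀ ω, 0 ≤ p ω) (X : Ω → A) (a : A) : 0 ≤ rvDist p X a :=
  Finset.sum_nonneg fun ω _ => by split <;> simp [hp ω]

lemma exists_of_rvDist_ne (X : Ω → A) {a : A} (h : rvDist p X a ≠ 0) :
    ∃ ω, X ω = a ∧ p ω ≠ 0 := by
  by_contra hc
  push_neg at hc
  apply h
  apply Finset.sum_eq_zero
  intro ω _
  by_cases hx : X ω = a
  · simp [hx, hc ω hx]
  · simp [hx]

lemma le_rvDist (hp : ∀ ω, 0 ≤ p ω) (X : Ω → A) (ω : Ω) : p ω ≤ rvDist p X (X ω) := by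
  have := Finset.single_le_sum (f := fun ω' => if X ω' = X ω then p ω' else 0)
    (fun ω' _ => by split <;> simp [hp ω']) (Finset.mem_univ ω)
  simpa [rvDist] using this

lemma rvDist_ae_congr {X X' : Ω → A} (h : ∀ ω, p ω ≠ 0 → X ω = X' ω) (a : A) :
    rvDist p X a = rvDist p X' a := by
  apply Finset.sum_congr rfl
  intro ω _
  by_cases hω : p ω = 0
  · simp [hω]
  · rw [h ω hω]

lemma ent_ae_congr {X X' : Ω → A} (h : ∀ ω, p ω ≠ 0 → X ω = X' ω) :
    ent p X = ent p X' := by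
  unfold ent
  exact Finset.sum_congr rfl fun a _ => by rw [rvDist_ae_congr h]

lemma rvDist_comp_eq (X : Ω → A) (f : A → B) (g : B → A) (h : ∀ ω, g (f (X ω)) = X ω)
    {a : A} (ha : g (f a) = a) :
    rvDist p (fun ω => f (X ω)) (f a) = rvDist p X a := by
  apply Finset.sum_congr rfl
  intro ω _
  by_cases hx : X ω = a
  · simp [hx]
  · have : f (X ω) ≠ f a := fun hfa => hx (by rw [← h ω, hfa, ha])
    simp [hx, this]

lemma ent_comp (hp : ∀ ω, 0 ≤ p ω) (X : Ω → A) (f : A → B) (g : B → A)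
    (h : ∀ ω, g (f (X ω)) = X ω) : ent p (fun ω => f (X ω)) = ent p X := by
  classical
  unfold ent
  rw [← Finset.sum_filter_of_ne (s := (Finset.univ : Finset A))
        (p := fun a => rvDist p X a ≠ 0) (fun a _ hne => by
          intro h0; exact hne (by rw [h0]; simp)),
      ← Finset.sum_filter_of_ne (s := (Finset.univ : Finset B))
        (p := fun b => rvDist p (fun ω => f (X ω)) b ≠ 0) (fun b _ hne => by
          intro h0; exact hne (by rw [h0]; simp))]
  symm
  apply Finset.sum_nbij' (i := f) (j := g)
  · intro a ha
    simp only [Finset.mem_filter, Finset.mem_univ, true_and] at ha ⊢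
    obtain ⟨ω, hXω, -⟩ := exists_of_rvDist_ne X ha
    rw [rvDist_comp_eq X f g h (by rw [← hXω, h ω])]
    exact ha
  · intro b hb
    simp only [Finset.mem_filter, Finset.mem_univ, true_and] at hb ⊢
    obtain ⟨ω, hXω, hpω⟩ := exists_of_rvDist_ne _ hb
    have : g b = X ω := by rw [← hXω, h ω]
    rw [this]
    have h1 := le_rvDist hp X ω
    have h2 := (hp ω).lt_of_ne (Ne.symm hpω)
    exact ne_of_gt (lt_of_lt_of_le h2 h1)
  · intro a ha
    simp only [Finset.mem_filter, Finset.mem_univ, true_and] at ha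
    obtain ⟨ω, hXω, -⟩ := exists_of_rvDist_ne X ha
    rw [← hXω, h ω]
  · intro b hb
    simp only [Finset.mem_filter, Finset.mem_univ, true_and] at hb
    obtain ⟨ω, hXω, -⟩ := exists_of_rvDist_ne _ hb
    rw [← hXω]
    congr 1
    exact h ω
  · intro a ha
    simp only [Finset.mem_filter, Finset.mem_univ, true_and] at ha
    obtain ⟨ω, hXω, -⟩ := exists_of_rvDist_ne X ha
    rw [rvDist_comp_eq X f g h (by rw [← hXω, h ω])]

lemma ent_eq_ent (hp : ∀ ω, 0 ≤ p ω) {X : Ω → A} {Y : Ω → B} (f : A → B) (g : B → A)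
    (hf : ∀ ω, Y ω = f (X ω)) (hg : ∀ ω, X ω = g (Y ω)) : ent p X = ent p Y := by
  have h1 : ent p (fun ω => f (X ω)) = ent p X :=
    ent_comp hp X f g (fun ω => by rw [← hf ω, ← hg ω])
  rw [← h1]
  exact ent_ae_congr (fun ω _ => (hf ω).symm)

lemma ent_pair_of_fn (hp : ∀ ω, 0 ≤ p ω) {X : Ω → A} {Y : Ω → C} (f : C → A)
    (h : ∀ ω, p ω ≠ 0 → X ω = f (Y ω)) :
    ent p (fun ω => (X ω, Y ω)) = ent p Y := by
  have h1 : ent p (fun ω => (X ω, Y ω)) = ent p (fun ω => (f (Y ω), Y ω)) :=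
    ent_ae_congr (fun ω hω => by rw [h ω hω])
  rw [h1]
  exact ent_comp hp Y (fun c => (f c, c)) Prod.snd (fun ω => rfl)

lemma ent_subsingleton [Subsingleton A] (hp1 : ∑ ω, p ω = 1) (X : Ω → A) :
    ent p X = 0 := by
  unfold ent
  apply Finset.sum_eq_zero
  intro a _
  have : rvDist p X a = 1 := by
    unfold rvDist
    rw [← hp1]
    exact Finset.sum_congr rfl fun ω _ => by simp [Subsingleton.elim (X ω) a]
  rw [this, Real.negMulLog_one]

/- superadditivity of negMulLog -/
lemma negMulLog_term_le {ι : Type*} [Fintype ι] (r : ι → ℝ) (h : ∀ i, 0 ≤ r i) (i : ι) :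
    -(r i) * Real.log (∑ j, r j) ≤ Real.negMulLog (r i) := by
  rcases eq_or_lt_of_le (h i) with h0 | h0
  · simp [← h0]
  · rw [Real.negMulLog, neg_mul, neg_mul, neg_le_neg_iff]
    apply mul_le_mul_of_nonneg_left _ (h i)
    exact Real.log_le_log h0 (Finset.single_le_sum (fun j _ => h j) (Finset.mem_univ i))

lemma negMulLog_sum_le {ι : Type*} [Fintype ι] (r : ι → ℝ) (h : ∀ i, 0 ≤ r i) :
    Real.negMulLog (∑ i, r i) ≤ ∑ i, Real.negMulLog (r i) := by
  calc Real.negMulLog (∑ i, r i) = ∑ i, -(r i) * Real.log (∑ j, r j) := by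
        rw [Real.negMulLog]
        rw [← Finset.sum_mul, ← Finset.sum_neg_distrib]
      _ ≤ _ := Finset.sum_le_sum fun i _ => negMulLog_term_le r h i

lemma unique_of_negMulLog_sum_eq {ι : Type*} [Fintype ι] [DecidableEq ι] (r : ι → ℝ)
    (h : ∀ i, 0 ≤ r i)
    (heq : ∑ i, Real.negMulLog (r i) = Real.negMulLog (∑ i, r i))
    {i j : ι} (hi : r i ≠ 0) (hj : r j ≠ 0) : i = j := by
  by_contra hij
  have hi' : 0 < r i := (h i).lt_of_ne (Ne.symm hi)
  have hj' : 0 < r j := (h j).lt_of_ne (Ne.symm hj)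
  have hlt : r i < ∑ k, r k := by
    have h2 : r i + r j ≤ ∑ k, r k := by
      have : ∑ k ∈ ({i, j} : Finset ι), r k ≤ ∑ k, r k :=
        Finset.sum_le_sum_of_subset_of_nonneg (Finset.subset_univ _) (fun k _ _ => h k)
      rwa [Finset.sum_pair hij] at this
    linarith
  have hstrict : -(r i) * Real.log (∑ k, r k) < Real.negMulLog (r i) := by
    rw [Real.negMulLog, neg_mul, neg_mul, neg_lt_neg_iff]
    exact mul_lt_mul_of_pos_left (Real.log_lt_log hi' hlt) hi'
  have hsum : ∑ k, -(r k) * Real.log (∑ j, r j) < ∑ k, Real.negMulLog (r k) :=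
    Finset.sum_lt_sum (fun k _ => negMulLog_term_le r h k) ⟨i, Finset.mem_univ i, hstrict⟩
  have heq2 : ∑ k, -(r k) * Real.log (∑ j, r j) = Real.negMulLog (∑ k, r k) := by
    rw [Real.negMulLog]
    rw [← Finset.sum_mul, ← Finset.sum_neg_distrib]
  rw [heq2, ← heq] at hsum
  exact lt_irrefl _ hsum

lemma rvDist_marginal (p : Ω → ℝ) (X : Ω → A) (Y : Ω → C) (c : C) :
    rvDist p Y c = ∑ a, rvDist p (fun ω => (X ω, Y ω)) (a, c) := by
  unfold rvDist
  rw [Finset.sum_comm]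
  apply Finset.sum_congr rfl
  intro ω _
  simp only [Prod.mk.injEq]
  by_cases hy : Y ω = c
  · simp [hy]
  · simp [hy]

lemma condEnt_zero_extract (hp : ∀ ω, 0 ≤ p ω) (hp1 : ∑ ω, p ω = 1)
    (X : Ω → A) (Y : Ω → C) (h : condEnt p X Y = 0) :
    ∃ f : C → A, ∀ ω, p ω ≠ 0 → X ω = f (Y ω) := by
  classical
  have hΩ : Nonempty Ω := by
    by_contra hΩ
    rw [not_nonempty_iff] at hΩ
    rw [Finset.univ_eq_empty, Finset.sum_empty] at hp1
    norm_num at hp1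
  set r : A → C → ℝ := fun a c => rvDist p (fun ω => (X ω, Y ω)) (a, c) with hr
  have hrnn : ∀ a c, 0 ≤ r a c := fun a c => rvDist_nonneg hp _ _
  have hterm : ∀ c, Real.negMulLog (∑ a, r a c) ≤ ∑ a, Real.negMulLog (r a c) :=
    fun c => negMulLog_sum_le _ (fun a => hrnn a c)
  have hce : condEnt p X Y
      = ∑ c, (∑ a, Real.negMulLog (r a c) - Real.negMulLog (∑ a, r a c)) := by
    unfold condEnt ent
    rw [Finset.sum_sub_distrib]
    congr 1
    · rw [Fintype.sum_prod_type, Finset.sum_comm]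
    · exact Finset.sum_congr rfl fun c _ => by rw [rvDist_marginal p X Y c]
  have hzero : ∀ c, ∑ a, Real.negMulLog (r a c) - Real.negMulLog (∑ a, r a c) = 0 := by
    rw [hce] at h
    intro c
    exact (Finset.sum_eq_zero_iff_of_nonneg
      (fun c _ => by linarith [hterm c])).mp h c (Finset.mem_univ c)
  have huniq : ∀ c a a', r a c ≠ 0 → r a' c ≠ 0 → a = a' := by
    intro c a a' ha ha'
    exact unique_of_negMulLog_sum_eq _ (fun a => hrnn a c) (by linarith [hzero c]) ha ha'
  refine ⟨fun c => if hc : ∃ a, r a c ≠ 0 then hc.choose else X (Classical.arbitrary Ω), ?_⟩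
  intro ω hpω
  have hrw : r (X ω) (Y ω) ≠ 0 := by
    have h1 : p ω ≤ r (X ω) (Y ω) := by
      have := Finset.single_le_sum
        (f := fun ω' => if (X ω', Y ω') = (X ω, Y ω) then p ω' else 0)
        (fun ω' _ => by split <;> simp [hp ω']) (Finset.mem_univ ω)
      simpa [hr, rvDist, Prod.ext_iff] using this
    have := (hp ω).lt_of_ne (Ne.symm hpω)
    exact ne_of_gt (lt_of_lt_of_le this h1)
  have hex : ∃ a, r a (Y ω) ≠ 0 := ⟨X ω, hrw⟩
  simp only [hex, dif_pos]
  exact huniq (Y ω) (X ω) hex.choose hrw hex.choose_spec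

/- CMI expansion -/
lemma CMI_expand (p : Ω → ℝ) (X : Ω → A) (Y : Ω → B) (W : Ω → C) :
    CMI p X Y W = ent p (fun ω => (X ω, W ω)) + ent p (fun ω => (Y ω, W ω))
      - ent p (fun ω => ((X ω, Y ω), W ω)) - ent p W := by
  unfold CMI condEnt
  ring

/- per-step chain rule for MI -/
lemma CMI_step (hp : ∀ ω, 0 ≤ p ω) {X0 : Ω → M} {Ei : Ω → B} {Z : Ω → C} {Z' : Ω → D}
    (f : D → B × C) (g : B × C → D)
    (hf : ∀ ω, (Ei ω, Z ω) = f (Z' ω)) (hg : ∀ ω, Z' ω = g (Ei ω, Z ω)) :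
    CMI p X0 Ei Z = (ent p (fun ω => (X0 ω, Z ω)) - ent p Z)
      - (ent p (fun ω => (X0 ω, Z' ω)) - ent p Z') := by
  have c1 : ent p Z' = ent p (fun ω => (Ei ω, Z ω)) :=
    ent_eq_ent hp f g hf hg
  have c2 : ent p (fun ω => (X0 ω, Z' ω)) = ent p (fun ω => ((X0 ω, Ei ω), Z ω)) := by
    apply ent_eq_ent hp (fun md => ((md.1, (f md.2).1), (f md.2).2))
      (fun mbc => (mbc.1.1, g (mbc.1.2, mbc.2)))
    · intro ω
      show ((X0 ω, Ei ω), Z ω) = ((X0 ω, (f (Z' ω)).1), (f (Z' ω)).2)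
      rw [← hf ω]
    · intro ω
      show (X0 ω, Z' ω) = (X0 ω, g (Ei ω, Z ω))
      rw [← hg ω]
  rw [CMI_expand, c1, c2]
  ring

/- Markov step: replace x0 by x^i in CMI -/
lemma CMI_markov_swap (hp : ∀ ω, 0 ≤ p ω) {X0 : Ω → M} {Ei : Ω → B} {Z : Ω → C} {Xi : Ω → D}
    (G : M × C → D) (hG : ∀ ω, p ω ≠ 0 → Xi ω = G (X0 ω, Z ω))
    (hm : CMI p X0 Ei (fun ω => (Z ω, Xi ω)) = 0) :
    CMI p X0 Ei Z = CMI p Xi Ei Z := by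
  have E1 : ent p (fun ω => (X0 ω, (Z ω, Xi ω))) = ent p (fun ω => (X0 ω, Z ω)) := by
    have c : ent p (fun ω => (X0 ω, (Z ω, Xi ω)))
        = ent p (fun ω => (Xi ω, (X0 ω, Z ω))) :=
      ent_eq_ent hp (fun w => (w.2.2, (w.1, w.2.1))) (fun w => (w.2.1, (w.2.2, w.1)))
        (fun ω => rfl) (fun ω => rfl)
    rw [c]
    exact ent_pair_of_fn hp G hG
  have E2 : ent p (fun ω => ((X0 ω, Ei ω), (Z ω, Xi ω)))
      = ent p (fun ω => ((X0 ω, Ei ω), Z ω)) := by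
    have c : ent p (fun ω => ((X0 ω, Ei ω), (Z ω, Xi ω)))
        = ent p (fun ω => (Xi ω, ((X0 ω, Ei ω), Z ω))) :=
      ent_eq_ent hp (fun w => (w.2.2, (w.1, w.2.1))) (fun w => (w.2.1, (w.2.2, w.1)))
        (fun ω => rfl) (fun ω => rfl)
    rw [c]
    exact ent_pair_of_fn hp (fun w => G (w.1.1, w.2)) (fun ω hω => hG ω hω)
  have E3 : ent p (fun ω => (Ei ω, (Z ω, Xi ω)))
      = ent p (fun ω => ((Xi ω, Ei ω), Z ω)) :=
    ent_eq_ent hp (fun w => ((w.2.2, w.1), w.2.1)) (fun w => (w.1.2, (w.2, w.1.1)))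
      (fun ω => rfl) (fun ω => rfl)
  have E4 : ent p (fun ω => (Z ω, Xi ω)) = ent p (fun ω => (Xi ω, Z ω)) :=
    ent_eq_ent hp Prod.swap Prod.swap (fun ω => rfl) (fun ω => rfl)
  rw [CMI_expand] at hm
  rw [E1, E2, E3, E4] at hm
  rw [CMI_expand, CMI_expand]
  linarith

set_option linter.unusedSectionVars false
/- structural lemmas about `pre` -/
lemma pre_snoc {n : ℕ} {α : Type*} (x : Fin n → Ω → α) (k : ℕ) (h : k < n) (ω : Ω) :
    pre x (k+1) h ω = Fin.snoc (pre x k h.le ω) (x ⟨k, h⟩ ω) := by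
  funext j
  rcases lt_or_ge (j : ℕ) k with hj | hj
  · have hje : j = Fin.castSucc (j.castLT hj) := by ext; simp
    rw [hje, Fin.snoc_castSucc]
    rfl
  · have hje : j = Fin.last k := by
      ext
      have := j.isLt
      simp only [Fin.val_last]
      omega
    rw [hje, Fin.snoc_last]
    rfl

lemma pre_init {n : ℕ} {α : Type*} (x : Fin n → Ω → α) (k : ℕ) (h : k < n) (ω : Ω) :
    Fin.init (pre x (k+1) h ω) = pre x k h.le ω := by
  rw [pre_snoc x k h ω, Fin.init_snoc]

lemma pre_last {n : ℕ} {α : Type*} (x : Fin n → Ω → α) (k : ℕ) (h : k < n) (ω : Ω) :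
    pre x (k+1) h ω (Fin.last k) = x ⟨k, h⟩ ω := by
  rw [pre_snoc x k h ω, Fin.snoc_last]

end Aux

/-- Lemma 1: if each `x_i` is a deterministic function of `(x_0, e^{i-1})`
and the Markov chain `x_0 - (e^{i-1}, x^i) - e_i` holds, then `I(x_0; e^n) = I(x^n → e^n)`. -/
theorem lemma1_feedback_identity {Ω M A B : Type*} [Fintype Ω] [Fintype M] [DecidableEq M]
    [Fintype A] [DecidableEq A] [Fintype B] [DecidableEq B] {n : ℕ} (p : Ω → ℝ)
    (hp : ∀ ω, 0 ≤ p ω) (hp1 : ∑ ω, p ω = 1)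
    (x0 : Ω → M) (x : Fin n → Ω → A) (e : Fin n → Ω → B)
    (hdet : ∀ i : Fin n, condEnt p (x i) (fun ω => (x0 ω, pre e i.1 i.isLt.le ω)) = 0)
    (hmarkov : ∀ i : Fin n,
      CMI p x0 (e i) (fun ω => (pre e i.1 i.isLt.le ω, pre x (i.1+1) i.isLt ω)) = 0) :
    MI p x0 (fun ω i => e i ω) = DI p x e := by
  classical
  -- determinism: x^(k+1) is a.s. a function of (x0, e^k)
  have key : ∀ k, ∀ hk : k < n, ∃ G : M × (Fin k → B) → (Fin (k+1) → A),
      ∀ ω, p ω ≠ 0 → pre x (k+1) hk ω = G (x0 ω, pre e k hk.le ω) := by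
    intro k
    induction k with
    | zero =>
      intro hk
      obtain ⟨f, hf⟩ := condEnt_zero_extract hp hp1 (x ⟨0, hk⟩)
        (fun ω => (x0 ω, pre e 0 (Nat.zero_le n) ω)) (hdet ⟨0, hk⟩)
      refine ⟨fun w _ => f w, ?_⟩
      intro ω hω
      funext j
      have hj : Fin.castLE hk j = ⟨0, hk⟩ := by
        ext
        simp [Fin.val_eq_zero j]
      show x (Fin.castLE hk j) ω = f (x0 ω, pre e 0 hk.le ω)
      rw [hj]
      exact hf ω hω
    | succ k ih =>
      intro hk
      have hk' : k < n := Nat.lt_of_succ_lt hk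
      obtain ⟨G, hG⟩ := ih hk'
      obtain ⟨f, hf⟩ := condEnt_zero_extract hp hp1 (x ⟨k+1, hk⟩)
        (fun ω => (x0 ω, pre e (k+1) (le_of_lt hk) ω)) (hdet ⟨k+1, hk⟩)
      refine ⟨fun w => Fin.snoc (G (w.1, Fin.init w.2)) (f w), ?_⟩
      intro ω hω
      rw [pre_snoc x (k+1) hk ω]
      show _ = Fin.snoc (α := fun _ => A) (G (x0 ω, Fin.init (pre e (k+1) hk.le ω)))
        (f (x0 ω, pre e (k+1) hk.le ω))
      rw [pre_init e k hk' ω, hG ω hω, hf ω hω]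
  -- telescoping function
  set F : ℕ → ℝ := fun k =>
    if h : k ≤ n then ent p (fun ω => (x0 ω, pre e k h ω)) - ent p (pre e k h) else 0
    with hF
  -- per-step: CMI p x0 (e i) (pre e i) = F i - F (i+1)
  have step1 : ∀ i : Fin n,
      CMI p x0 (e i) (pre e i.1 i.isLt.le) = F i.1 - F (i.1 + 1) := by
    intro i
    have hFi : F i.1 = ent p (fun ω => (x0 ω, pre e i.1 i.isLt.le ω))
        - ent p (pre e i.1 i.isLt.le) := by
      rw [hF]; exact dif_pos i.isLt.le
    have hFi1 : F (i.1+1) = ent p (fun ω => (x0 ω, pre e (i.1+1) i.isLt ω))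
        - ent p (pre e (i.1+1) i.isLt) := by
      rw [hF]; exact dif_pos i.isLt
    rw [hFi, hFi1]
    apply CMI_step hp (Z' := pre e (i.1+1) i.isLt)
      (f := fun r => (r (Fin.last i.1), Fin.init r))
      (g := fun bc => Fin.snoc bc.2 bc.1)
    · intro ω
      have h1 := pre_last e i.1 i.isLt ω
      have h2 := pre_init e i.1 i.isLt ω
      rw [Prod.ext_iff]
      constructor
      · show e i ω = pre e (i.1+1) i.isLt ω (Fin.last i.1)
        rw [h1, Fin.eta]
      · exact h2.symm
    · intro ω
      show pre e (i.1+1) i.isLt ω = Fin.snoc (pre e i.1 i.isLt.le ω) (e i ω)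
      rw [pre_snoc e i.1 i.isLt ω, Fin.eta]
  -- chain rule: MI = ∑ CMI x0
  have chain : MI p x0 (fun ω i => e i ω)
      = ∑ i : Fin n, CMI p x0 (e i) (pre e i.1 i.isLt.le) := by
    have htel : ∑ i ∈ Finset.range n, (F i - F (i+1)) = F 0 - F n :=
      Finset.sum_range_sub' F n
    have hsum : ∑ i : Fin n, CMI p x0 (e i) (pre e i.1 i.isLt.le)
        = ∑ i ∈ Finset.range n, (F i - F (i+1)) := by
      rw [← Fin.sum_univ_eq_sum_range (fun i => F i - F (i+1)) n]
      exact Finset.sum_congr rfl fun i _ => step1 i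
    rw [hsum, htel]
    have hF0 : F 0 = ent p x0 := by
      simp only [hF]
      rw [dif_pos (Nat.zero_le n)]
      have h1 : ent p (pre e 0 (Nat.zero_le n)) = 0 := ent_subsingleton hp1 _
      have h2 : ent p (fun ω => (x0 ω, pre e 0 (Nat.zero_le n) ω)) = ent p x0 := by
        apply ent_eq_ent hp Prod.fst (fun m => (m, fun j => j.elim0))
        · intro ω; rfl
        · intro ω
          show (x0 ω, pre e 0 (Nat.zero_le n) ω) = (x0 ω, fun j => j.elim0)
          exact Prod.ext rfl (Subsingleton.elim _ _)
      rw [h1, h2]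
      ring
    have hFn : F n = ent p (fun ω => (x0 ω, fun i => e i ω))
        - ent p (fun ω (i : Fin n) => e i ω) := by
      simp only [hF]
      rw [dif_pos (le_refl n)]
      have hpre : pre e n (le_refl n) = fun ω (i : Fin n) => e i ω := by
        funext ω j
        show e (Fin.castLE (le_refl n) j) ω = e j ω
        congr 1
      rw [hpre]
    rw [hF0, hFn]
    unfold MI
    ring
  rw [chain]
  unfold DI
  apply Finset.sum_congr rfl
  intro i _
  obtain ⟨G, hG⟩ := key i.1 i.isLt
  exact CMI_markov_swap hp G hG (hmarkov i)
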